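/- arXiv:2210.07325 — 5 statements merged into one kernel-verified Lean document; each statement's English description precedes it below -/
import Mathlib

section
/- Let H be a complex Hilbert space, X a unitary operator on H, and μ a finite Borel measure on the unit circle 𝕋. Then X preserves μ on the right (i.e., [UX]_μ is unitarily equivalent to [U]_μ for every unitary U on H) if and only if X preserves μ on the left (i.e., [XU]_μ is unitarily equivalent to [U]_μ for every unitary U on H). -/
open MeasureTheory InnerProductSpace

noncomputable section

instance : MeasurableSpace Circle := borel Circle
instance : BorelSpace Circle := ⟨rfl⟩

/-- arc-length (Haar/Lebesgue) measure on the circle -/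
def ell : Measure Circle := Measure.map Circle.exp (volume.restrict (Set.Ioc 0 (2 * Real.pi)))

variable {K : Type*} [NormedAddCommGroup K] [InnerProductSpace ℂ K]

/-- `ν` is the spectral measure of the pair `(U, ψ)`. -/
def IsSpectralMeasure (U : K ≃ₗᵢ[ℂ] K) (ψ : K) (ν : Measure Circle) : Prop :=
  IsFiniteMeasure ν ∧ ∀ n : ℤ, (inner ℂ ψ ((U ^ n) ψ) : ℂ) = ∫ z, (z : ℂ) ^ n ∂ν

open Classical in
/-- the spectral measure of the pair `(U, ψ)` -/
def specMeasure (U : K ≃ₗᵢ[ℂ] K) (ψ : K) : Measure Circle :=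
  if h : ∃ ν, IsSpectralMeasure U ψ ν then h.choose else 0

/-- the set `H_μ(U)` -/
def specSet (μ : Measure Circle) (U : K ≃ₗᵢ[ℂ] K) : Set K :=
  {ψ | specMeasure U ψ ≪ μ}

open Classical in
/-- the subspace `H_μ(U)` -/
def specSub (μ : Measure Circle) (U : K ≃ₗᵢ[ℂ] K) : Submodule ℂ K :=
  if h : ∃ S : Submodule ℂ K, (S : Set K) = specSet μ U then h.choose else ⊥

open Classical in
/-- the restriction `[U]_μ` of `U` to `H_μ(U)` -/
def restr (μ : Measure Circle) (U : K ≃ₗᵢ[ℂ] K) :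
    (specSub μ U) ≃ₗᵢ[ℂ] (specSub μ U) :=
  if h : ∃ V : (specSub μ U) ≃ₗᵢ[ℂ] (specSub μ U), ∀ ψ : specSub μ U, (V ψ : K) = U ψ
  then h.choose else LinearIsometryEquiv.refl ℂ _

/-- unitary equivalence of unitary operators on (possibly different) Hilbert spaces -/
def UnitarilyEquiv {K₁ K₂ : Type*} [NormedAddCommGroup K₁] [InnerProductSpace ℂ K₁]
    [NormedAddCommGroup K₂] [InnerProductSpace ℂ K₂]
    (A : K₁ ≃ₗᵢ[ℂ] K₁) (B : K₂ ≃ₗᵢ[ℂ] K₂) : Prop :=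
  ∃ V : K₁ ≃ₗᵢ[ℂ] K₂, ∀ x, V (A x) = B (V x)

/-- `X` preserves `μ` : for every unitary `U`, `[UX]_μ ≅ [U]_μ`. -/
def Preserves (μ : Measure Circle) (X : K ≃ₗᵢ[ℂ] K) : Prop :=
  ∀ U : K ≃ₗᵢ[ℂ] K, UnitarilyEquiv (restr μ (X.trans U)) (restr μ U)


/-- `X` preserves `μ` on the left : for every unitary `U`, `[XU]_μ ≅ [U]_μ`. -/
def PreservesLeft (μ : Measure Circle) (X : K ≃ₗᵢ[ℂ] K) : Prop :=
  ∀ U : K ≃ₗᵢ[ℂ] K, UnitarilyEquiv (restr μ (U.trans X)) (restr μ U)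


section Aux

variable {K : Type*} [NormedAddCommGroup K] [InnerProductSpace ℂ K]

lemma conj_apply_pow (X A : K ≃ₗᵢ[ℂ] K) (n : ℤ) (ψ : K) :
    ((X * A * X⁻¹)^n) (X ψ) = X ((A^n) ψ) := by
  rw [conj_zpow]; simp [LinearIsometryEquiv.coe_mul]

lemma isSpectralMeasure_conj (X A : K ≃ₗᵢ[ℂ] K) (ψ : K) :
    IsSpectralMeasure (X * A * X⁻¹) (X ψ) = IsSpectralMeasure A ψ := by
  funext ν
  apply propext
  unfold IsSpectralMeasure
  refine and_congr Iff.rfl (forall_congr' fun n => ?_)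
  rw [conj_apply_pow, X.inner_map_map]

lemma specMeasure_conj (X A : K ≃ₗᵢ[ℂ] K) (ψ : K) :
    specMeasure (X * A * X⁻¹) (X ψ) = specMeasure A ψ := by
  unfold specMeasure
  rw [isSpectralMeasure_conj]

lemma specSet_conj (μ : Measure Circle) (X A : K ≃ₗᵢ[ℂ] K) :
    specSet μ (X * A * X⁻¹) = X '' specSet μ A := by
  ext χ
  constructor
  · intro h
    exact ⟨X.symm χ, by
      have : specMeasure A (X.symm χ) = specMeasure (X * A * X⁻¹) χ := by
        rw [← specMeasure_conj X A (X.symm χ), X.apply_symm_apply]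
      simpa [specSet, this] using h, X.apply_symm_apply χ⟩
  · rintro ⟨ψ, hψ, rfl⟩
    simpa [specSet, specMeasure_conj] using hψ

lemma coe_specSub (μ : Measure Circle) (U : K ≃ₗᵢ[ℂ] K)
    (h : ∃ S : Submodule ℂ K, (S : Set K) = specSet μ U) :
    ((specSub μ U : Submodule ℂ K) : Set K) = specSet μ U := by
  rw [specSub, dif_pos h]; exact h.choose_spec

lemma specSub_junk (μ : Measure Circle) (U : K ≃ₗᵢ[ℂ] K)
    (h : ¬ ∃ S : Submodule ℂ K, (S : Set K) = specSet μ U) :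
    specSub μ U = ⊥ := by
  rw [specSub, dif_neg h]

lemma specSub_ex_conj (μ : Measure Circle) (X A : K ≃ₗᵢ[ℂ] K)
    (h : ∃ S : Submodule ℂ K, (S : Set K) = specSet μ A) :
    ∃ S : Submodule ℂ K, (S : Set K) = specSet μ (X * A * X⁻¹) := by
  obtain ⟨S, hS⟩ := h
  exact ⟨S.map (X.toLinearEquiv : K →ₗ[ℂ] K), by
    rw [Submodule.map_coe, hS, specSet_conj]; rfl⟩

lemma conj_conj (X A : K ≃ₗᵢ[ℂ] K) : X⁻¹ * (X * A * X⁻¹) * X⁻¹⁻¹ = A := by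
  group

lemma specSub_ex_conj_iff (μ : Measure Circle) (X A : K ≃ₗᵢ[ℂ] K) :
    (∃ S : Submodule ℂ K, (S : Set K) = specSet μ A) ↔
    (∃ S : Submodule ℂ K, (S : Set K) = specSet μ (X * A * X⁻¹)) := by
  constructor
  · exact specSub_ex_conj μ X A
  · intro h
    have := specSub_ex_conj μ X⁻¹ (X * A * X⁻¹) h
    rwa [conj_conj] at this

lemma specSub_conj (μ : Measure Circle) (X A : K ≃ₗᵢ[ℂ] K) :
    specSub μ (X * A * X⁻¹) = (specSub μ A).map (X.toLinearEquiv : K →ₗ[ℂ] K) := by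
  by_cases h : ∃ S : Submodule ℂ K, (S : Set K) = specSet μ A
  · apply SetLike.ext'
    rw [coe_specSub μ _ ((specSub_ex_conj_iff μ X A).mp h), specSet_conj,
      Submodule.map_coe, coe_specSub μ A h]
    rfl
  · rw [specSub_junk μ A h, specSub_junk μ _ (fun hc => h ((specSub_ex_conj_iff μ X A).mpr hc)),
      Submodule.map_bot]

/-- the canonical isometry `H_μ(A) ≃ H_μ(XAX⁻¹)` induced by `X` -/
def conjMap (μ : Measure Circle) (X A : K ≃ₗᵢ[ℂ] K) :
    (specSub μ A) ≃ₗᵢ[ℂ] (specSub μ (X * A * X⁻¹)) :=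
  { toLinearEquiv := (X.toLinearEquiv.submoduleMap (specSub μ A)).trans
      (LinearEquiv.ofEq _ _ (specSub_conj μ X A).symm)
    norm_map' := fun x => by
      change ‖((((X.toLinearEquiv.submoduleMap (specSub μ A)).trans
        (LinearEquiv.ofEq _ _ (specSub_conj μ X A).symm)) x : K))‖ = ‖(x : K)‖
      simp [LinearEquiv.trans_apply] }

lemma conjMap_coe (μ : Measure Circle) (X A : K ≃ₗᵢ[ℂ] K) (x : specSub μ A) :
    ((conjMap μ X A x : specSub μ (X * A * X⁻¹)) : K) = X (x : K) := by
  simp [conjMap, LinearEquiv.trans_apply]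

lemma conjMap_symm_coe (μ : Measure Circle) (X A : K ≃ₗᵢ[ℂ] K)
    (y : specSub μ (X * A * X⁻¹)) :
    (((conjMap μ X A).symm y : specSub μ A) : K) = X.symm (y : K) := by
  apply X.injective
  rw [X.apply_symm_apply, ← conjMap_coe μ X A, LinearIsometryEquiv.apply_symm_apply]

lemma restr_ex_conj (μ : Measure Circle) (X A : K ≃ₗᵢ[ℂ] K)
    (h : ∃ V : (specSub μ A) ≃ₗᵢ[ℂ] (specSub μ A), ∀ ψ : specSub μ A, (V ψ : K) = A ψ) :
    ∃ V : (specSub μ (X * A * X⁻¹)) ≃ₗᵢ[ℂ] (specSub μ (X * A * X⁻¹)),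
      ∀ ψ : specSub μ (X * A * X⁻¹), (V ψ : K) = (X * A * X⁻¹) ψ := by
  obtain ⟨W, hW⟩ := h
  refine ⟨((conjMap μ X A).symm.trans W).trans (conjMap μ X A), fun ψ => ?_⟩
  simp only [LinearIsometryEquiv.trans_apply, conjMap_coe, hW, conjMap_symm_coe]
  rfl

lemma restr_ex_conj_iff (μ : Measure Circle) (X A : K ≃ₗᵢ[ℂ] K) :
    (∃ V : (specSub μ A) ≃ₗᵢ[ℂ] (specSub μ A), ∀ ψ : specSub μ A, (V ψ : K) = A ψ) ↔
    (∃ V : (specSub μ (X * A * X⁻¹)) ≃ₗᵢ[ℂ] (specSub μ (X * A * X⁻¹)),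
      ∀ ψ : specSub μ (X * A * X⁻¹), (V ψ : K) = (X * A * X⁻¹) ψ) := by
  constructor
  · exact restr_ex_conj μ X A
  · intro h
    have := restr_ex_conj μ X⁻¹ (X * A * X⁻¹) h
    rwa [conj_conj] at this

lemma coe_restr (μ : Measure Circle) (U : K ≃ₗᵢ[ℂ] K)
    (h : ∃ V : (specSub μ U) ≃ₗᵢ[ℂ] (specSub μ U), ∀ ψ : specSub μ U, (V ψ : K) = U ψ)
    (ψ : specSub μ U) : (restr μ U ψ : K) = U ψ := by
  rw [restr, dif_pos h]; exact h.choose_spec ψ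

lemma restr_junk (μ : Measure Circle) (U : K ≃ₗᵢ[ℂ] K)
    (h : ¬ ∃ V : (specSub μ U) ≃ₗᵢ[ℂ] (specSub μ U), ∀ ψ : specSub μ U, (V ψ : K) = U ψ) :
    restr μ U = LinearIsometryEquiv.refl ℂ _ := by
  rw [restr, dif_neg h]

lemma unitarilyEquiv_symm {K₁ K₂ : Type*} [NormedAddCommGroup K₁] [InnerProductSpace ℂ K₁]
    [NormedAddCommGroup K₂] [InnerProductSpace ℂ K₂]
    {A : K₁ ≃ₗᵢ[ℂ] K₁} {B : K₂ ≃ₗᵢ[ℂ] K₂} (h : UnitarilyEquiv A B) : UnitarilyEquiv B A := by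
  obtain ⟨V, hV⟩ := h
  refine ⟨V.symm, fun y => ?_⟩
  apply V.injective
  rw [LinearIsometryEquiv.apply_symm_apply, hV, LinearIsometryEquiv.apply_symm_apply]

lemma unitarilyEquiv_trans {K₁ K₂ K₃ : Type*} [NormedAddCommGroup K₁] [InnerProductSpace ℂ K₁]
    [NormedAddCommGroup K₂] [InnerProductSpace ℂ K₂]
    [NormedAddCommGroup K₃] [InnerProductSpace ℂ K₃]
    {A : K₁ ≃ₗᵢ[ℂ] K₁} {B : K₂ ≃ₗᵢ[ℂ] K₂} {C : K₃ ≃ₗᵢ[ℂ] K₃}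
    (h₁ : UnitarilyEquiv A B) (h₂ : UnitarilyEquiv B C) : UnitarilyEquiv A C := by
  obtain ⟨V, hV⟩ := h₁
  obtain ⟨W, hW⟩ := h₂
  exact ⟨V.trans W, fun x => by simp [LinearIsometryEquiv.trans_apply, hV, hW]⟩

lemma unitarilyEquiv_conj (μ : Measure Circle) (X A : K ≃ₗᵢ[ℂ] K) :
    UnitarilyEquiv (restr μ (X * A * X⁻¹)) (restr μ A) := by
  apply unitarilyEquiv_symm
  refine ⟨conjMap μ X A, fun x => ?_⟩
  by_cases h : ∃ V : (specSub μ A) ≃ₗᵢ[ℂ] (specSub μ A), ∀ ψ : specSub μ A, (V ψ : K) = A ψ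
  · have hc := (restr_ex_conj_iff μ X A).mp h
    apply Subtype.ext
    rw [conjMap_coe, coe_restr μ A h, coe_restr μ _ hc, conjMap_coe]
    simp [LinearIsometryEquiv.coe_mul]
  · have hc := fun hh => h ((restr_ex_conj_iff μ X A).mpr hh)
    rw [restr_junk μ A h, restr_junk μ _ hc]
    rfl

end Aux
/-- A unitary `X` preserves `μ` on the right if and only if it preserves `μ` on the left. -/
theorem preserves_right_iff_preserves_left {H : Type*} [NormedAddCommGroup H]
    [InnerProductSpace ℂ H] [CompleteSpace H]
    (μ : Measure Circle) [IsFiniteMeasure μ] (X : H ≃ₗᵢ[ℂ] H) :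
    Preserves μ X ↔ PreservesLeft μ X := by
  constructor
  · intro hP U
    show UnitarilyEquiv (restr μ (X * U)) (restr μ U)
    have h1 := unitarilyEquiv_conj μ X (U * X)
    have h2 : X * (U * X) * X⁻¹ = X * U := by group
    rw [h2] at h1
    exact unitarilyEquiv_trans h1 (hP U)
  · intro hP U
    show UnitarilyEquiv (restr μ (U * X)) (restr μ U)
    have h1 := unitarilyEquiv_conj μ X⁻¹ (X * U)
    have h2 : X⁻¹ * (X * U) * X⁻¹⁻¹ = U * X := by group
    rw [h2] at h1
    exact unitarilyEquiv_trans h1 (hP U)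

end
end

section
/- Let H be a complex Hilbert space and X a unitary operator on H that preserves a finite Borel measure μ on 𝕋. Then for every t ∈ ℝ, X preserves the rotated measure μ_t defined by μ_t(Δ) := μ(e^{it}Δ) for Borel sets Δ ⊆ 𝕋. -/
open MeasureTheory InnerProductSpace

noncomputable section

variable {K : Type*} [NormedAddCommGroup K] [InnerProductSpace ℂ K]

/-- The rotated measure `μ_t`, `μ_t(Δ) = μ(e^{it}Δ)`. -/
def rotMeasure (t : ℝ) (μ : Measure Circle) : Measure Circle :=
  Measure.map (fun z : Circle => Circle.exp (-t) * z) μ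

/-- scalar multiplication by a unit complex number, as a unitary operator -/
def smulU (c : Circle) : K ≃ₗᵢ[ℂ] K :=
  ⟨{ toFun := fun x => (c : ℂ) • x
     map_add' := fun x y => smul_add _ x y
     map_smul' := fun r x => smul_comm (c : ℂ) r x
     invFun := fun x => ((c⁻¹ : Circle) : ℂ) • x
     left_inv := fun x => by
       simp [← smul_assoc, smul_eq_mul]
     right_inv := fun x => by
       simp [← smul_assoc, smul_eq_mul] },
   fun x => by simpa [Circle.smul_def] using Circle.norm_smul c x⟩

@[simp] lemma smulU_apply (c : Circle) (x : K) : smulU c x = (c : ℂ) • x := rfl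

/-- `smulU` as a monoid hom -/
def smulHom : Circle →* (K ≃ₗᵢ[ℂ] K) where
  toFun := smulU
  map_one' := by ext x; simp
  map_mul' c d := by
    ext x
    show ((c * d : Circle) : ℂ) • x = (c : ℂ) • (d : ℂ) • x
    rw [Circle.coe_mul, mul_smul]

lemma smulU_zpow (c : Circle) (n : ℤ) :
    (smulU c : K ≃ₗᵢ[ℂ] K) ^ n = smulU (c ^ n) :=
  (map_zpow (smulHom (K := K)) c n).symm

lemma circle_coe_zpow (z : Circle) (n : ℤ) : ((z ^ n : Circle) : ℂ) = (z : ℂ) ^ n := by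
  cases n with
  | ofNat m => simpa using map_pow Circle.coeHom z m
  | negSucc m =>
      rw [zpow_negSucc, zpow_negSucc, Circle.coe_inv]
      norm_cast

lemma commute_smulU (c : Circle) (U : K ≃ₗᵢ[ℂ] K) : Commute (smulU c) U := by
  ext x
  simp [LinearIsometryEquiv.mul_def, Circle.smul_def, LinearIsometryEquiv.map_smul]

lemma trans_smulU_zpow (U : K ≃ₗᵢ[ℂ] K) (c : Circle) (n : ℤ) (ψ : K) :
    ((U.trans (smulU c)) ^ n) ψ = ((c ^ n : Circle) : ℂ) • ((U ^ n) ψ) := by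
  have h1 : U.trans (smulU c) = smulU c * U := rfl
  rw [h1, (commute_smulU c U).mul_zpow, smulU_zpow]
  rfl

/-- the character `z ↦ z ^ n` on the circle -/
def circChar (n : ℤ) : C(Circle, ℂ) :=
  ⟨fun z => ((z ^ n : Circle) : ℂ), by
    exact continuous_induced_dom.comp (continuous_zpow n)⟩

@[simp] lemma circChar_apply (n : ℤ) (z : Circle) : circChar n z = (z : ℂ) ^ n := by
  simp [circChar, circle_coe_zpow]

lemma integrable_continuousMap (ν : Measure Circle) [IsFiniteMeasure ν] (f : C(Circle, ℂ)) :
    Integrable f ν := by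
  exact (BoundedContinuousFunction.mkOfCompact f).integrable ν

lemma continuous_integral_CM (ν : Measure Circle) [IsFiniteMeasure ν] :
    Continuous fun f : C(Circle, ℂ) => ∫ x, f x ∂ν := by
  refine LipschitzWith.continuous (K := (ν Set.univ).toNNReal)
    (LipschitzWith.of_dist_le_mul fun f g => ?_)
  rw [dist_eq_norm, ← integral_sub (integrable_continuousMap ν f) (integrable_continuousMap ν g)]
  calc ‖∫ x, (f x - g x) ∂ν‖ ≤ dist f g * (ν Set.univ).toReal := by
        refine norm_integral_le_of_norm_le_const (Filter.Eventually.of_forall fun x => ?_)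
        rw [← dist_eq_norm]
        exact ContinuousMap.dist_apply_le_dist x
    _ = ((ν Set.univ).toNNReal : ℝ) * dist f g := by
        rw [mul_comm]; norm_cast

lemma span_circChar_mul {g : C(Circle, ℂ)}
    (hg : g ∈ Submodule.span ℂ (Set.range circChar)) (n : ℤ) :
    circChar n * g ∈ Submodule.span ℂ (Set.range circChar) := by
  induction hg using Submodule.span_induction with
  | mem x hx =>
      obtain ⟨m, rfl⟩ := hx
      refine Submodule.subset_span ⟨n + m, ?_⟩
      ext z
      simp [zpow_add₀ (Circle.coe_ne_zero z)]
  | zero => simpa using Submodule.zero_mem _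
  | add x y hx hy ihx ihy => simpa [mul_add] using Submodule.add_mem _ ihx ihy
  | smul c x hx ihx => simpa [mul_smul_comm] using Submodule.smul_mem _ c ihx

lemma span_circChar_mul' {f g : C(Circle, ℂ)}
    (hf : f ∈ Submodule.span ℂ (Set.range circChar))
    (hg : g ∈ Submodule.span ℂ (Set.range circChar)) :
    f * g ∈ Submodule.span ℂ (Set.range circChar) := by
  induction hf using Submodule.span_induction with
  | mem x hx => obtain ⟨n, rfl⟩ := hx; exact span_circChar_mul hg n
  | zero => simpa using Submodule.zero_mem _
  | add x y hx hy ihx ihy => simpa [add_mul] using Submodule.add_mem _ ihx ihy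
  | smul c x hx ihx => simpa [smul_mul_assoc] using Submodule.smul_mem _ c ihx

lemma span_circChar_star {f : C(Circle, ℂ)}
    (hf : f ∈ Submodule.span ℂ (Set.range circChar)) :
    star f ∈ Submodule.span ℂ (Set.range circChar) := by
  induction hf using Submodule.span_induction with
  | mem x hx =>
      obtain ⟨n, rfl⟩ := hx
      refine Submodule.subset_span ⟨-n, ?_⟩
      ext z
      simp only [ContinuousMap.star_apply, circChar_apply]
      have hst : star ((z : ℂ) ^ n) = ((z⁻¹ : Circle) : ℂ) ^ n := by
        rw [RCLike.star_def, map_zpow₀ (starRingEnd ℂ), ← Circle.coe_inv_eq_conj]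
      rw [hst, Circle.coe_inv, inv_zpow, ← zpow_neg]
  | zero => simpa using Submodule.zero_mem _
  | add x y hx hy ihx ihy => simpa [star_add] using Submodule.add_mem _ ihx ihy
  | smul c x hx ihx =>
      rw [star_smul]
      exact Submodule.smul_mem _ _ ihx

/-- A finite Borel measure on the circle is determined by its moments. -/
theorem measure_ext_moments {ν ν' : Measure Circle} [IsFiniteMeasure ν] [IsFiniteMeasure ν']
    (h : ∀ n : ℤ, ∫ z, (z : ℂ) ^ n ∂ν = ∫ z, (z : ℂ) ^ n ∂ν') : ν = ν' := by
  -- integrals of all continuous complex functions agree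
  have key : ∀ f : C(Circle, ℂ), ∫ x, f x ∂ν = ∫ x, f x ∂ν' := by
    have hchar : ∀ n : ℤ, ∫ x, circChar n x ∂ν = ∫ x, circChar n x ∂ν' := by
      intro n; simpa using h n
    -- the set of functions with equal integrals
    set M : Set C(Circle, ℂ) := {f | ∫ x, f x ∂ν = ∫ x, f x ∂ν'} with hM
    have hMclosed : IsClosed M :=
      isClosed_eq (continuous_integral_CM ν) (continuous_integral_CM ν')
    have hspan : ∀ f ∈ Submodule.span ℂ (Set.range circChar), f ∈ M := by
      intro f hf
      induction hf using Submodule.span_induction with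
      | mem x hx => obtain ⟨n, rfl⟩ := hx; exact hchar n
      | zero => simp [hM]
      | add x y hx hy ihx ihy =>
          simp only [hM, Set.mem_setOf_eq, ContinuousMap.add_apply] at ihx ihy ⊢
          rw [integral_add (integrable_continuousMap ν x) (integrable_continuousMap ν y),
            integral_add (integrable_continuousMap ν' x) (integrable_continuousMap ν' y),
            ihx, ihy]
      | smul c x hx ihx =>
          simp only [hM, Set.mem_setOf_eq, ContinuousMap.smul_apply] at ihx ⊢
          rw [integral_smul, integral_smul, ihx]
    -- the star subalgebra generated by the identity character
    set A : StarSubalgebra ℂ C(Circle, ℂ) := StarAlgebra.adjoin ℂ {circChar 1} with hA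
    have hAsep : A.SeparatesPoints := by
      intro x y hxy
      refine ⟨_, ⟨circChar 1, StarAlgebra.self_mem_adjoin_singleton ℂ _, rfl⟩, ?_⟩
      simp only [circChar_apply, zpow_one]
      exact fun hc => hxy (Subtype.coe_injective hc)
    have hAspan : ∀ f ∈ A, f ∈ Submodule.span ℂ (Set.range circChar) := by
      intro f hf
      induction hf using StarAlgebra.adjoin_induction with
      | mem x hx =>
          rw [Set.mem_singleton_iff] at hx
          exact Submodule.subset_span ⟨1, hx.symm⟩
      | algebraMap r =>
          have h1 : algebraMap ℂ C(Circle, ℂ) r = r • circChar 0 := by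
            ext z
            simp [Algebra.algebraMap_eq_smul_one]
          rw [h1]
          exact Submodule.smul_mem _ _ (Submodule.subset_span ⟨0, rfl⟩)
      | add x y hx hy ihx ihy => exact Submodule.add_mem _ ihx ihy
      | mul x y hx hy ihx ihy => exact span_circChar_mul' ihx ihy
      | star x hx ihx => exact span_circChar_star ihx
    intro f
    have hdense : A.topologicalClosure = ⊤ :=
      ContinuousMap.starSubalgebra_topologicalClosure_eq_top_of_separatesPoints A hAsep
    have hfmem : f ∈ closure (A : Set C(Circle, ℂ)) := by
      have : f ∈ A.topologicalClosure := hdense ▸ trivial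
      exact this
    have hsub : closure (A : Set C(Circle, ℂ)) ⊆ M :=
      closure_minimal (fun g hg => hspan g (hAspan g hg)) hMclosed
    exact hsub hfmem
  -- conclude equality of the measures
  apply ext_of_forall_lintegral_eq_of_IsFiniteMeasure
  intro f
  have hint : ∀ ρ : Measure Circle, [IsFiniteMeasure ρ] →
      Integrable (fun x => (f x : ℝ)) ρ := fun ρ _ =>
    BoundedContinuousFunction.integrable_of_nnreal ρ f
  have hreal : ∫ x, (f x : ℝ) ∂ν = ∫ x, (f x : ℝ) ∂ν' := by
    have hkey := key ⟨fun x => (RCLike.ofReal (K := ℂ) (f x : ℝ)), by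
      exact RCLike.continuous_ofReal.comp (NNReal.continuous_coe.comp f.continuous)⟩
    simp only [ContinuousMap.coe_mk] at hkey
    rw [integral_ofReal, integral_ofReal] at hkey
    exact_mod_cast hkey
  rw [lintegral_coe_eq_integral _ (hint ν), lintegral_coe_eq_integral _ (hint ν'), hreal]

lemma specMeasure_eq_of {U : K ≃ₗᵢ[ℂ] K} {ψ : K} {ν : Measure Circle}
    (h : IsSpectralMeasure U ψ ν) : specMeasure U ψ = ν := by
  have hex : ∃ ν, IsSpectralMeasure U ψ ν := ⟨ν, h⟩
  rw [specMeasure, dif_pos hex]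
  have h1 := hex.choose_spec
  haveI := h1.1
  haveI := h.1
  refine measure_ext_moments fun n => ?_
  rw [← h1.2 n, h.2 n]

lemma measurable_circle_mul (c : Circle) : Measurable fun z : Circle => c * z :=
  (continuous_mul_left c).measurable

lemma isSpectralMeasure_smul {U : K ≃ₗᵢ[ℂ] K} {ψ : K} {ν : Measure Circle}
    (h : IsSpectralMeasure U ψ ν) (c : Circle) :
    IsSpectralMeasure (U.trans (smulU c)) ψ (ν.map (fun z => c * z)) := by
  haveI := h.1
  constructor
  · constructor
    rw [Measure.map_apply (measurable_circle_mul c) MeasurableSet.univ, Set.preimage_univ]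
    exact measure_lt_top ν _
  · intro n
    rw [trans_smulU_zpow U c n ψ, inner_smul_right, h.2 n,
      integral_map (measurable_circle_mul c).aemeasurable
        (by exact (Continuous.aestronglyMeasurable (by continuity)))]
    simp only [circle_coe_zpow, Circle.coe_mul]
    rw [← integral_const_mul]
    congr 1
    ext z
    rw [mul_zpow]

lemma exists_isSpectralMeasure_smul_iff (U : K ≃ₗᵢ[ℂ] K) (ψ : K) (c : Circle) :
    (∃ ν, IsSpectralMeasure U ψ ν) ↔ (∃ ν, IsSpectralMeasure (U.trans (smulU c)) ψ ν) := by
  constructor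
  · rintro ⟨ν, h⟩
    exact ⟨_, isSpectralMeasure_smul h c⟩
  · rintro ⟨ν, h⟩
    have h2 := isSpectralMeasure_smul h c⁻¹
    have he : (U.trans (smulU c)).trans (smulU c⁻¹) = U := by
      ext x
      simp [LinearIsometryEquiv.trans_apply, ← smul_assoc, smul_eq_mul,
        ← Circle.coe_mul]
    rw [he] at h2
    exact ⟨_, h2⟩

lemma specMeasure_smul (U : K ≃ₗᵢ[ℂ] K) (ψ : K) (c : Circle) :
    specMeasure (U.trans (smulU c)) ψ = (specMeasure U ψ).map (fun z => c * z) := by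
  by_cases hex : ∃ ν, IsSpectralMeasure U ψ ν
  · obtain ⟨ν, h⟩ := hex
    rw [specMeasure_eq_of h, specMeasure_eq_of (isSpectralMeasure_smul h c)]
  · have hex2 : ¬ ∃ ν, IsSpectralMeasure (U.trans (smulU c)) ψ ν := by
      rw [← exists_isSpectralMeasure_smul_iff]; exact hex
    rw [specMeasure, specMeasure, dif_neg hex, dif_neg hex2, Measure.map_zero]

lemma specMeasure_apply_self (U : K ≃ₗᵢ[ℂ] K) (ψ : K) :
    specMeasure U (U ψ) = specMeasure U ψ := by
  have h1 : ∀ n : ℤ, (U ^ n) (U ψ) = U ((U ^ n) ψ) := by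
    intro n
    have hc := ((Commute.refl U).zpow_left n).eq
    calc (U ^ n) (U ψ) = (U ^ n * U) ψ := rfl
      _ = (U * U ^ n) ψ := by rw [hc]
      _ = U ((U ^ n) ψ) := rfl
  have hpred : IsSpectralMeasure U (U ψ) = IsSpectralMeasure U ψ := by
    funext ν
    rw [IsSpectralMeasure, IsSpectralMeasure, eq_iff_iff]
    refine and_congr_right fun _ => forall_congr' fun n => ?_
    rw [h1 n, LinearIsometryEquiv.inner_map_map]
  rw [specMeasure, specMeasure, hpred]

lemma specMeasure_apply_symm (U : K ≃ₗᵢ[ℂ] K) (ψ : K) :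
    specMeasure U (U.symm ψ) = specMeasure U ψ := by
  conv_rhs => rw [← U.apply_symm_apply ψ]
  rw [specMeasure_apply_self]

lemma map_circle_mul_ac_iff (c : Circle) (ν μ' : Measure Circle) :
    ν.map (fun z => c * z) ≪ μ' ↔ ν ≪ μ'.map (fun z => c⁻¹ * z) := by
  have key : ∀ (d : Circle) (ρ : Measure Circle),
      (ρ.map (fun z => d * z)).map (fun z => d⁻¹ * z) = ρ := by
    intro d ρ
    rw [Measure.map_map (measurable_circle_mul d⁻¹) (measurable_circle_mul d)]
    have hfun : ((fun z : Circle => d⁻¹ * z) ∘ fun z : Circle => d * z) = id :=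
      funext fun z => by simp [inv_mul_cancel_left]
    rw [hfun, Measure.map_id]
  constructor
  · intro h
    have h2 := h.map (measurable_circle_mul c⁻¹)
    rwa [key c ν] at h2
  · intro h
    have h2 := h.map (measurable_circle_mul c)
    have h3 := key c⁻¹ μ'
    rw [inv_inv] at h3
    rwa [h3] at h2

lemma specSet_rot (t : ℝ) (μ : Measure Circle) (U : K ≃ₗᵢ[ℂ] K) :
    specSet (rotMeasure t μ) U = specSet μ (U.trans (smulU (Circle.exp t))) := by
  ext ψ
  simp only [specSet, Set.mem_setOf_eq, specMeasure_smul, map_circle_mul_ac_iff,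
    rotMeasure, Circle.exp_neg]

lemma specSub_rot (t : ℝ) (μ : Measure Circle) (U : K ≃ₗᵢ[ℂ] K) :
    specSub (rotMeasure t μ) U = specSub μ (U.trans (smulU (Circle.exp t))) := by
  unfold specSub
  rw [specSet_rot]

lemma exists_restr (μ : Measure Circle) (W : K ≃ₗᵢ[ℂ] K) :
    ∃ V : (specSub μ W) ≃ₗᵢ[ℂ] (specSub μ W), ∀ ψ : specSub μ W, (V ψ : K) = W ψ := by
  by_cases h : ∃ S : Submodule ℂ K, (S : Set K) = specSet μ W
  · have hS : ((specSub μ W : Submodule ℂ K) : Set K) = specSet μ W := by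
      rw [specSub, dif_pos h]
      exact h.choose_spec
    have hmem : ∀ x : K, x ∈ specSub μ W ↔ specMeasure W x ≪ μ := by
      intro x
      rw [← SetLike.mem_coe, hS]
      rfl
    have hW : ∀ x : K, x ∈ specSub μ W → W x ∈ specSub μ W := fun x hx =>
      (hmem _).2 (by rw [specMeasure_apply_self]; exact (hmem _).1 hx)
    have hW' : ∀ x : K, x ∈ specSub μ W → W.symm x ∈ specSub μ W := fun x hx =>
      (hmem _).2 (by rw [specMeasure_apply_symm]; exact (hmem _).1 hx)
    refine ⟨⟨{ toFun := fun x => ⟨W x, hW x x.2⟩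
               map_add' := fun x y => Subtype.ext (W.map_add x y)
               map_smul' := fun r x => Subtype.ext (W.map_smul r x)
               invFun := fun x => ⟨W.symm x, hW' x x.2⟩
               left_inv := fun x => Subtype.ext (W.symm_apply_apply x)
               right_inv := fun x => Subtype.ext (W.apply_symm_apply x) },
             fun x => W.norm_map x⟩, fun ψ => rfl⟩
  · refine ⟨LinearIsometryEquiv.refl ℂ _, fun ψ => ?_⟩
    have hbot : (specSub μ W : Submodule ℂ K) = ⊥ := by rw [specSub, dif_neg h]
    have hle : specSub μ W ≤ ⊥ := le_of_eq hbot
    have hψ : (ψ : K) = 0 := (Submodule.mem_bot ℂ).1 (hle ψ.2)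
    show (ψ : K) = W (ψ : K)
    rw [hψ, map_zero]

lemma restr_spec (μ : Measure Circle) (W : K ≃ₗᵢ[ℂ] K) (ψ : specSub μ W) :
    ((restr μ W) ψ : K) = W ψ := by
  have h := exists_restr μ W
  rw [restr, dif_pos h]
  exact h.choose_spec ψ

/-- If `X` preserves `μ`, then `X` preserves every rotated measure `μ_t`. -/
theorem preserves_rotMeasure {H : Type*} [NormedAddCommGroup H]
    [InnerProductSpace ℂ H] [CompleteSpace H]
    (μ : Measure Circle) [IsFiniteMeasure μ]
    (X : H ≃ₗᵢ[ℂ] H) (hX : Preserves μ X) (t : ℝ) :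
    Preserves (rotMeasure t μ) X := by
  intro U
  set c := Circle.exp t with hc
  set cU := U.trans (smulU c) with hcU
  obtain ⟨V', hV'⟩ := hX cU
  have e₁ : specSub (rotMeasure t μ) (X.trans U) = specSub μ (X.trans cU) :=
    specSub_rot t μ (X.trans U)
  have e₂ : specSub (rotMeasure t μ) U = specSub μ cU := specSub_rot t μ U
  set E₁ := LinearIsometryEquiv.ofEq _ _ e₁ with hE₁
  set E₂ := LinearIsometryEquiv.ofEq _ _ e₂ with hE₂
  have hcoe₁ : ∀ y : specSub (rotMeasure t μ) (X.trans U), ((E₁ y : H)) = (y : H) :=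
    fun _ => rfl
  have hcoe₂ : ∀ y : specSub μ cU, ((E₂.symm y : H)) = (y : H) := fun _ => rfl
  have key : ∀ (z w : specSub μ (X.trans cU)), (w : H) = (X.trans U) (z : H) →
      ((V' w : H)) = U ((V' z : H)) := by
    intro z w hw
    have hwz : w = (c : ℂ)⁻¹ • (restr μ (X.trans cU) z) := by
      apply Subtype.ext
      rw [Submodule.coe_smul, restr_spec]
      have h1 : (X.trans cU) (z : H) = (c : ℂ) • ((X.trans U) (z : H)) := rfl
      rw [h1, inv_smul_smul₀ (Circle.coe_ne_zero c), hw]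
    rw [hwz, LinearIsometryEquiv.map_smul, Submodule.coe_smul, hV' z, restr_spec]
    have h2 : cU ((V' z : H)) = (c : ℂ) • U ((V' z : H)) := rfl
    rw [h2, inv_smul_smul₀ (Circle.coe_ne_zero c)]
  refine ⟨E₁.trans (V'.trans E₂.symm), fun x => ?_⟩
  apply Subtype.ext
  simp only [LinearIsometryEquiv.trans_apply]
  rw [hcoe₂, restr_spec, hcoe₂]
  exact key (E₁ x) (E₁ (restr (rotMeasure t μ) (X.trans U) x))
    (by rw [hcoe₁, hcoe₁, restr_spec])

end
end

section
/- Let H be a complex Hilbert space, μ a finite Borel measure on 𝕋, and X, Y unitary operators on H. If X preserves μ and Y preserves μ, then the product XY preserves μ. -/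
open MeasureTheory InnerProductSpace

noncomputable section

variable {K : Type*} [NormedAddCommGroup K] [InnerProductSpace ℂ K]

/-- If `X` and `Y` both preserve `μ`, then the product `XY` preserves `μ`. -/
theorem preserves_mul {H : Type*} [NormedAddCommGroup H]
    [InnerProductSpace ℂ H] [CompleteSpace H]
    (μ : Measure Circle) [IsFiniteMeasure μ]
    (X Y : H ≃ₗᵢ[ℂ] H) (hX : Preserves μ X) (hY : Preserves μ Y) :
    Preserves μ (Y.trans X) := by
  intro U
  have h1 := hY (X.trans U)
  have h2 := hX U
  have he : (Y.trans X).trans U = Y.trans (X.trans U) := rfl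
  rw [he]
  obtain ⟨V₁, hV₁⟩ := h1
  obtain ⟨V₂, hV₂⟩ := h2
  exact ⟨V₁.trans V₂, fun x => by simp [hV₁, hV₂]⟩

end
end

section
/- Let U be a unitary operator on a complex Hilbert space H and let φ be a unit vector that is cyclic for U. Then for every λ ∈ ℝ, φ is cyclic for the perturbed unitary operator U_λ := U(𝟙 + (e^{iλ} − 1)P_φ), where P_φ is the orthogonal projection onto the span of φ. -/
open MeasureTheory InnerProductSpace

noncomputable section

variable {K : Type*} [NormedAddCommGroup K] [InnerProductSpace ℂ K]

/-- `φ` is a cyclic vector for `U`: the closed linear span of `{U^j φ : j ∈ ℤ}` is all of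
the space. -/
def CyclicVector (U : K ≃ₗᵢ[ℂ] K) (φ : K) : Prop :=
  (Submodule.span ℂ (Set.range fun j : ℤ => (U ^ j) φ)).topologicalClosure = ⊤

open Classical in
/-- The unitary operator `e^{iλP_φ} = 𝟙 + (e^{iλ} - 1)P_φ`, where `P_φ` is the orthogonal
projection onto the span of the unit vector `φ`. -/
def expProj (φ : K) (lam : ℝ) : K ≃ₗᵢ[ℂ] K :=
  if h : ∃ V : K ≃ₗᵢ[ℂ] K,
      ∀ ξ, V ξ = ξ + ((Complex.exp (lam * Complex.I) - 1) * (inner ℂ φ ξ : ℂ)) • φ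
  then h.choose else LinearIsometryEquiv.refl ℂ K

/-- The rank-one multiplicative perturbation `U_λ = U e^{iλP_φ} = U(𝟙 + (e^{iλ}-1)P_φ)`. -/
def Ulam (U : K ≃ₗᵢ[ℂ] K) (φ : K) (lam : ℝ) : K ≃ₗᵢ[ℂ] K :=
  (expProj φ lam).trans U

lemma expProj_exists (φ : K) (hφ : ‖φ‖ = 1) (lam : ℝ) :
    ∃ V : K ≃ₗᵢ[ℂ] K,
      ∀ ξ, V ξ = ξ + ((Complex.exp (lam * Complex.I) - 1) * (inner ℂ φ ξ : ℂ)) • φ := by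
  set c : ℂ := Complex.exp (lam * Complex.I) - 1 with hc
  set c' : ℂ := Complex.exp (-(lam * Complex.I)) - 1 with hc'
  have hφ2 : (inner ℂ φ φ : ℂ) = 1 := by
    rw [inner_self_eq_norm_sq_to_K, hφ]; norm_num
  have hmul : Complex.exp (lam * Complex.I) * Complex.exp (-(lam * Complex.I)) = 1 := by
    rw [← Complex.exp_add, add_neg_cancel, Complex.exp_zero]
  have key : c + c' + c * c' = 0 := by
    simp only [hc, hc']; ring_nf; linear_combination hmul
  have hconj : (starRingEnd ℂ) c = c' := by
    simp only [hc, hc', map_sub, map_one, ← Complex.exp_conj, map_mul, Complex.conj_ofReal,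
      Complex.conj_I, mul_neg]
  have hconj' : (starRingEnd ℂ) c' = c := by
    rw [← hconj, Complex.conj_conj]
  let f : K →ₗ[ℂ] K :=
  { toFun := fun ξ => ξ + (c * (inner ℂ φ ξ : ℂ)) • φ
    map_add' := fun x y => by
      simp [inner_add_right, mul_add, add_smul]; abel
    map_smul' := fun a x => by
      simp [inner_smul_right, smul_smul, smul_add]; ring_nf }
  have hf : ∀ ξ, f ξ = ξ + (c * (inner ℂ φ ξ : ℂ)) • φ := fun ξ => rfl
  let e : K ≃ₗ[ℂ] K :=
  { f with
    invFun := fun ξ => ξ + (c' * (inner ℂ φ ξ : ℂ)) • φ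
    left_inv := by
      intro ξ
      simp only [hf, LinearMap.coe_mk, AddHom.coe_mk]
      rw [inner_add_right, inner_smul_right, hφ2]
      rw [add_assoc, ← add_smul]
      have : c * (inner ℂ φ ξ : ℂ) + c' * ((inner ℂ φ ξ : ℂ) + c * (inner ℂ φ ξ : ℂ) * 1) = 0 := by
        ring_nf; linear_combination (inner ℂ φ ξ : ℂ) * key
      rw [this, zero_smul, add_zero]
    right_inv := by
      intro ξ
      simp only [LinearMap.toFun_eq_coe, hf, LinearMap.coe_mk, AddHom.coe_mk]
      rw [inner_add_right, inner_smul_right, hφ2]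
      rw [add_assoc, ← add_smul]
      have : c' * (inner ℂ φ ξ : ℂ) + c * ((inner ℂ φ ξ : ℂ) + c' * (inner ℂ φ ξ : ℂ) * 1) = 0 := by
        ring_nf; linear_combination (inner ℂ φ ξ : ℂ) * key
      rw [this, zero_smul, add_zero] }
  have hinner : ∀ x y : K, (inner ℂ (e x) (e y) : ℂ) = inner ℂ x y := by
    intro x y
    have hex : e x = x + (c * (inner ℂ φ x : ℂ)) • φ := rfl
    have hey : e y = y + (c * (inner ℂ φ y : ℂ)) • φ := rfl
    rw [hex, hey, inner_add_left, inner_add_right, inner_add_right, inner_smul_left,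
      inner_smul_right, inner_smul_left, inner_smul_right, hφ2, ← inner_conj_symm φ x,
      map_mul, hconj, Complex.conj_conj]
    ring_nf
    linear_combination (inner ℂ φ y : ℂ) * (inner ℂ x φ : ℂ) * hmul
  refine ⟨e.isometryOfInner hinner, fun ξ => rfl⟩


lemma expProj_apply (φ : K) (hφ : ‖φ‖ = 1) (lam : ℝ) (ξ : K) :
    expProj φ lam ξ = ξ + ((Complex.exp (lam * Complex.I) - 1) * (inner ℂ φ ξ : ℂ)) • φ := by
  classical
  have h := expProj_exists φ hφ lam
  rw [expProj, dif_pos h]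
  exact h.choose_spec ξ

/-- If the unit vector `φ` is cyclic for `U`, then it is cyclic for every perturbed
operator `U_λ = U(𝟙 + (e^{iλ}-1)P_φ)`. -/
theorem cyclic_Ulam {H : Type*} [NormedAddCommGroup H]
    [InnerProductSpace ℂ H] [CompleteSpace H]
    (U : H ≃ₗᵢ[ℂ] H) (φ : H) (hφ : ‖φ‖ = 1) (hcyc : CyclicVector U φ) (lam : ℝ) :
    CyclicVector (Ulam U φ lam) φ := by
  classical
  unfold CyclicVector at hcyc ⊢
  set V := Ulam U φ lam with hVdef
  set M := (Submodule.span ℂ (Set.range fun j : ℤ => (V ^ j) φ)).topologicalClosure with hMdef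
  have horb : ∀ j : ℤ, (V ^ j) φ ∈ M := fun j =>
    Submodule.le_topologicalClosure _ (Submodule.subset_span ⟨j, rfl⟩)
  have hφM : φ ∈ M := by simpa using horb 0
  have hstep : ∀ (T : H ≃ₗᵢ[ℂ] H), (∀ j : ℤ, T ((V ^ j) φ) ∈ M) → ∀ x ∈ M, T x ∈ M := by
    intro T hT x hx
    have hle : M ≤ M.comap (T.toLinearEquiv.toLinearMap) := by
      apply Submodule.topologicalClosure_minimal
      · rw [Submodule.span_le]
        rintro s ⟨j, rfl⟩
        exact hT j
      · exact IsClosed.preimage T.continuous (Submodule.isClosed_topologicalClosure _)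
    exact hle hx
  have hVM : ∀ x ∈ M, V x ∈ M := by
    apply hstep
    intro j
    have h1 : V ((V ^ j) φ) = (V ^ (1 + j)) φ := by
      rw [zpow_add, zpow_one, LinearIsometryEquiv.coe_mul]; rfl
    rw [h1]; exact horb _
  have hVM' : ∀ x ∈ M, V.symm x ∈ M := by
    apply hstep
    intro j
    have h1 : V.symm ((V ^ j) φ) = (V ^ (-1 + j)) φ := by
      rw [zpow_add, LinearIsometryEquiv.coe_mul, zpow_neg, zpow_one,
        LinearIsometryEquiv.coe_inv]; rfl
    rw [h1]; exact horb _
  have hE : ∀ x ∈ M, expProj φ lam x ∈ M := by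
    intro x hx
    rw [expProj_apply φ hφ lam x]
    exact M.add_mem hx (M.smul_mem _ hφM)
  have hE' : ∀ x ∈ M, (expProj φ lam).symm x ∈ M := by
    intro x hx
    have h1 : expProj φ lam ((expProj φ lam).symm x) = x := (expProj φ lam).apply_symm_apply x
    rw [expProj_apply φ hφ lam] at h1
    have h2 : (expProj φ lam).symm x
        = x - ((Complex.exp (lam * Complex.I) - 1)
            * (inner ℂ φ ((expProj φ lam).symm x) : ℂ)) • φ := by
      exact eq_sub_of_add_eq h1
    rw [h2]
    exact M.sub_mem hx (M.smul_mem _ hφM)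
  have hUM : ∀ x ∈ M, U x ∈ M := by
    intro x hx
    have h1 : U x = V ((expProj φ lam).symm x) := by
      rw [hVdef]
      show U x = U (expProj φ lam ((expProj φ lam).symm x))
      rw [(expProj φ lam).apply_symm_apply]
    rw [h1]
    exact hVM _ (hE' x hx)
  have hUM' : ∀ x ∈ M, U.symm x ∈ M := by
    intro x hx
    have h1 : U.symm x = expProj φ lam (V.symm x) := by
      rw [hVdef]
      show U.symm x = expProj φ lam ((expProj φ lam).symm (U.symm x))
      rw [(expProj φ lam).apply_symm_apply]
    rw [h1]
    exact hE _ (hVM' x hx)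
  have hUorb : ∀ j : ℤ, (U ^ j) φ ∈ M := by
    intro j
    induction j using Int.induction_on with
    | zero => simpa using hφM
    | succ n ih =>
        have h1 : (U ^ ((n : ℤ) + 1)) φ = U ((U ^ (n : ℤ)) φ) := by
          rw [add_comm, zpow_add, zpow_one, LinearIsometryEquiv.coe_mul]; rfl
        rw [h1]; exact hUM _ ih
    | pred n ih =>
        have h1 : (U ^ (-(n : ℤ) - 1)) φ = U.symm ((U ^ (-(n : ℤ))) φ) := by
          rw [sub_eq_add_neg, add_comm, zpow_add, LinearIsometryEquiv.coe_mul, zpow_neg,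
            zpow_one, LinearIsometryEquiv.coe_inv]; rfl
        rw [h1]; exact hUM' _ ih
  have hle : (Submodule.span ℂ (Set.range fun j : ℤ => (U ^ j) φ)).topologicalClosure ≤ M := by
    apply Submodule.topologicalClosure_minimal
    · rw [Submodule.span_le]; rintro s ⟨j, rfl⟩; exact hUorb j
    · exact Submodule.isClosed_topologicalClosure _
  rw [hcyc] at hle
  exact le_antisymm le_top hle

end
end

section
/- Let X be a unitary operator on a complex Hilbert space H such that X ≠ c𝟙 for every c ∈ 𝕋. Then there exists a unit vector φ ∈ H such that φ and X*φ are linearly independent and, setting R := 𝟙 − 2P_φ and Z := X*R*XR, the operator W := Z − 𝟙, which acts by Wξ = [4⟨φ,ξ⟩⟨φ,Xφ⟩ − 2⟨φ,Xξ⟩] X*φ − 2⟨φ,ξ⟩φ, has rank exactly 2. -/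
open MeasureTheory InnerProductSpace

noncomputable section

variable {K : Type*} [NormedAddCommGroup K] [InnerProductSpace ℂ K]

/-- The reflection `R = 𝟙 - 2P_φ` (as a plain map): `ξ ↦ ξ - 2⟨φ,ξ⟩φ`. -/
def reflVec (φ ξ : K) : K := ξ - (2 * (inner ℂ φ ξ : ℂ)) • φ

/-- The operator `W` with `Wξ = [4⟨φ,ξ⟩⟨φ,Xφ⟩ - 2⟨φ,Xξ⟩] X*φ - 2⟨φ,ξ⟩φ`. -/
def Wmap (X : K ≃ₗᵢ[ℂ] K) (φ : K) : K →ₗ[ℂ] K where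
  toFun ξ := (4 * (inner ℂ φ ξ : ℂ) * (inner ℂ φ (X φ) : ℂ) - 2 * (inner ℂ φ (X ξ) : ℂ)) • X.symm φ
      - (2 * (inner ℂ φ ξ : ℂ)) • φ
  map_add' ξ η := by
    simp only [map_add, inner_add_right]
    module
  map_smul' c ξ := by
    simp only [LinearIsometryEquiv.map_smul, inner_smul_right, RingHom.id_apply]
    module


/-- If every vector is an "eigenvector" of an additive, ℂ-homogeneous map, the map is scalar. -/
lemma all_eigen_scalar {H : Type*} [NormedAddCommGroup H] [InnerProductSpace ℂ H] (f : H → H)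
    (hadd : ∀ x y : H, f (x + y) = f x + f y)
    (hsmul : ∀ (c : ℂ) (x : H), f (c • x) = c • f x)
    (h : ∀ v : H, ∃ c : ℂ, f v = c • v) (v₀ : H) (hv₀ : v₀ ≠ 0) :
    ∃ c : ℂ, ∀ v : H, f v = c • v := by
  obtain ⟨c₀, hc₀⟩ := h v₀
  refine ⟨c₀, fun w => ?_⟩
  by_cases hdep : ∃ t : ℂ, w = t • v₀
  · obtain ⟨t, rfl⟩ := hdep
    rw [hsmul, hc₀, smul_comm]
  · obtain ⟨cw, hcw⟩ := h w
    obtain ⟨c₁, hc₁⟩ := h (v₀ + w)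
    have he : c₀ • v₀ + cw • w = c₁ • v₀ + c₁ • w := by
      rw [← hc₀, ← hcw, ← hadd, hc₁, smul_add]
    have h2 : (cw - c₁) • w = (c₁ - c₀) • v₀ := by
      rw [sub_smul, sub_smul, sub_eq_sub_iff_add_eq_add, add_comm (cw • w)]
      exact he
    by_cases hcwc : cw = c₁
    · have hcc : c₁ = c₀ := by
        by_contra hne
        have : v₀ = 0 := by
          have := h2
          rw [hcwc, sub_self, zero_smul] at this
          exact (smul_eq_zero.mp this.symm).resolve_left (sub_ne_zero.mpr hne)
        exact hv₀ this
      rw [hcw, hcwc, hcc]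
    · exfalso
      apply hdep
      refine ⟨(cw - c₁)⁻¹ * (c₁ - c₀), ?_⟩
      rw [mul_smul, ← h2, smul_smul, inv_mul_cancel₀ (sub_ne_zero.mpr hcwc), one_smul]

/-- If the unitary `X` is not a unimodular multiple of the identity, then there is a unit
vector `φ` such that `φ` and `X*φ` are linearly independent and, with `R = 𝟙 - 2P_φ` and
`Z = X*R*XR`, the operator `W = Z - 𝟙` (which acts by
`Wξ = [4⟨φ,ξ⟩⟨φ,Xφ⟩ - 2⟨φ,Xξ⟩] X*φ - 2⟨φ,ξ⟩φ`) has rank exactly `2`. -/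
theorem exists_unit_vector_rank_two {H : Type*} [NormedAddCommGroup H]
    [InnerProductSpace ℂ H] [CompleteSpace H]
    (X : H ≃ₗᵢ[ℂ] H) (hX : ∀ c : Circle, ∃ ξ : H, X ξ ≠ (c : ℂ) • ξ) :
    ∃ φ : H, ‖φ‖ = 1 ∧ LinearIndependent ℂ ![φ, X.symm φ] ∧
      (∀ ξ : H, ξ + Wmap X φ ξ = X.symm (reflVec φ (X (reflVec φ ξ)))) ∧
      Module.finrank ℂ (LinearMap.range (Wmap X φ)) = 2 := by
  -- Step 1: find a nonzero vector ψ with X.symm ψ not a multiple of ψ.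
  have hψex : ∃ ψ : H, ψ ≠ 0 ∧ ∀ r : ℂ, r • ψ ≠ X.symm ψ := by
    by_contra hcon
    push_neg at hcon
    have hall : ∀ ψ : H, ∃ r : ℂ, X.symm ψ = r • ψ := by
      intro ψ
      by_cases h0 : ψ = 0
      · exact ⟨0, by simp [h0]⟩
      · obtain ⟨r, hr⟩ := hcon ψ h0
        exact ⟨r, hr.symm⟩
    obtain ⟨ξ₀, hξ₀⟩ := hX 1
    have hξ0 : ξ₀ ≠ 0 := fun h => hξ₀ (by simp [h])
    obtain ⟨c, hc⟩ := all_eigen_scalar (fun v => X.symm v)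
      (fun x y => map_add _ x y) (fun c x => map_smul _ c x) hall ξ₀ hξ0
    have hc0 : c ≠ 0 := by
      intro h
      have h1 := hc ξ₀
      rw [h, zero_smul] at h1
      apply hξ0
      have := congrArg X h1
      simpa using this
    have hcn : ‖c‖ = 1 := by
      have h1 : ‖X.symm ξ₀‖ = ‖ξ₀‖ := X.symm.norm_map ξ₀
      rw [hc ξ₀, norm_smul] at h1
      have : ‖ξ₀‖ ≠ 0 := norm_ne_zero_iff.mpr hξ0
      field_simp at h1
      exact h1
    have hXv : ∀ v : H, X v = c⁻¹ • v := by
      intro v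
      have h1 := hc (X v)
      rw [X.symm_apply_apply] at h1
      rw [eq_inv_smul_iff₀ hc0]
      exact h1.symm
    have hcinv : ‖c⁻¹‖ = 1 := by rw [norm_inv, hcn]; norm_num
    obtain ⟨ξ, hξ⟩ := hX ⟨c⁻¹, mem_sphere_zero_iff_norm.mpr hcinv⟩
    exact hξ (hXv ξ)
  obtain ⟨ψ, hψ0, hψind⟩ := hψex
  -- Step 2: normalize.
  set n : ℂ := (‖ψ‖ : ℂ) with hn
  have hn0 : n ≠ 0 := by
    simp [hn, Complex.ofReal_eq_zero, norm_eq_zero, hψ0]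
  set φ : H := n⁻¹ • ψ with hφ
  have hφnorm : ‖φ‖ = 1 := by
    rw [hφ, norm_smul, norm_inv, hn, Complex.norm_real, norm_norm]
    exact inv_mul_cancel₀ (norm_ne_zero_iff.mpr hψ0)
  have hφ0 : φ ≠ 0 := by
    intro h
    rw [h] at hφnorm
    simp at hφnorm
  have hφind : ∀ r : ℂ, r • φ ≠ X.symm φ := by
    intro r h
    apply hψind r
    rw [hφ, LinearIsometryEquiv.map_smul, smul_comm] at h
    have := congrArg (fun x => n • x) h
    simp only [smul_smul] at this
    rwa [← mul_assoc, mul_inv_cancel₀ hn0, one_mul, one_smul] at this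
  have hLI : LinearIndependent ℂ ![φ, X.symm φ] := (LinearIndependent.pair_iff' hφ0).mpr hφind
  refine ⟨φ, hφnorm, hLI, ?_, ?_⟩
  · -- the pointwise identity
    intro ξ
    simp only [Wmap, reflVec, LinearMap.coe_mk, AddHom.coe_mk, map_sub, _root_.map_smul,
      inner_sub_right, inner_smul_right, LinearIsometryEquiv.symm_apply_apply]
    module
  · -- rank 2
    set u : H := X.symm φ with hu
    set a : ℂ := inner ℂ φ u with haa
    set b : ℂ := inner ℂ φ (X φ) with hbb
    have hφφ : (inner ℂ φ φ : ℂ) = 1 := by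
      rw [inner_self_eq_norm_sq_to_K, hφnorm]
      norm_num
    have hab' : a = (starRingEnd ℂ) b := by
      rw [haa, hbb, hu]
      rw [← X.inner_map_map φ (X.symm φ), X.apply_symm_apply, ← inner_conj_symm]
    have hunorm : ‖u‖ = 1 := by rw [hu, X.symm.norm_map, hφnorm]
    have hab : a * b ≠ 1 := by
      intro h
      have hna : ‖a‖ = 1 := by
        have h2 : b * (starRingEnd ℂ) b = 1 := by
          rw [hab'] at h; rw [mul_comm]; exact h
        rw [Complex.mul_conj] at h2
        have h3 : Complex.normSq b = 1 := by exact_mod_cast h2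
        have h4 : ‖b‖ = 1 := by
          have := Complex.normSq_eq_norm_sq b
          rw [h3] at this
          nlinarith [norm_nonneg b]
        rw [hab', Complex.norm_conj, h4]
      have heq : ‖(inner ℂ φ u : ℂ)‖ = ‖φ‖ * ‖u‖ := by
        rw [← haa, hna, hφnorm, hunorm]; norm_num
      have hu0 : u ≠ 0 := by
        intro h0
        rw [h0, norm_zero] at hunorm
        norm_num at hunorm
      obtain ⟨r, hr0, hr⟩ := (norm_inner_eq_norm_iff hφ0 hu0).mp heq
      exact hφind r hr.symm
    have hWφ : Wmap X φ φ = (2 * b) • u - (2 : ℂ) • φ := by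
      simp only [Wmap, LinearMap.coe_mk, AddHom.coe_mk, hφφ, ← hu, ← hbb]
      module
    have hWu : Wmap X φ u = (4 * a * b - 2) • u - (2 * a) • φ := by
      simp only [Wmap, LinearMap.coe_mk, AddHom.coe_mk, hu, X.apply_symm_apply, hφφ,
        ← hbb]
      rw [← hu, ← haa]
      module
    have humem : u ∈ LinearMap.range (Wmap X φ) := by
      have hmem1 : (2 - 2 * (a * b)) • u ∈ LinearMap.range (Wmap X φ) := by
        have heq1 : (2 - 2 * (a * b)) • u = a • Wmap X φ φ - Wmap X φ u := by
          rw [hWφ, hWu]; module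
        rw [heq1]
        exact sub_mem (Submodule.smul_mem _ _ ⟨φ, rfl⟩) ⟨u, rfl⟩
      have hne : (2 - 2 * (a * b) : ℂ) ≠ 0 := by
        intro h
        exact hab (by linear_combination -h / 2)
      have := Submodule.smul_mem _ (2 - 2 * (a * b))⁻¹ hmem1
      rwa [smul_smul, inv_mul_cancel₀ hne, one_smul] at this
    have hφmem : φ ∈ LinearMap.range (Wmap X φ) := by
      have heq2 : φ = b • u - (2 : ℂ)⁻¹ • Wmap X φ φ := by
        rw [hWφ]; module
      have hm : b • u - (2 : ℂ)⁻¹ • Wmap X φ φ ∈ LinearMap.range (Wmap X φ) :=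
        sub_mem (Submodule.smul_mem _ _ humem) (Submodule.smul_mem _ _ ⟨φ, rfl⟩)
      rwa [← heq2] at hm
    have hset : Set.range ![φ, u] = {φ, u} := by
      ext x
      simp [Fin.exists_fin_two]
      tauto
    have hrange : LinearMap.range (Wmap X φ) = Submodule.span ℂ (Set.range ![φ, u]) := by
      apply le_antisymm
      · rintro y ⟨ξ, rfl⟩
        simp only [Wmap, LinearMap.coe_mk, AddHom.coe_mk, ← hu]
        apply sub_mem
        · exact Submodule.smul_mem _ _ (Submodule.subset_span (by rw [hset]; simp))
        · exact Submodule.smul_mem _ _ (Submodule.subset_span (by rw [hset]; simp))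
      · rw [Submodule.span_le, hset]
        rintro x (rfl | rfl)
        · exact hφmem
        · exact humem
    rw [hrange]
    have := finrank_span_eq_card (R := ℂ) (b := ![φ, u]) (by rw [hu]; exact hLI)
    rw [this]
    simp


end
end
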